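/- The Jucys–Murphy elements of ℂG̃_n, defined recursively by j̃_1 = 0 and j̃_{i+1} = s_i j̃_i s_i + e_{i,i+1} s_i, pairwise commute: j̃_k j̃_l = j̃_l j̃_k for all k, l = 1,...,n. -/

import Mathlib

/-- The action of the symmetric group `S_n` on `G^n` permuting the copies of `G`. -/
def permHom (n : ℕ) (G : Type) [Group G] : Equiv.Perm (Fin n) →* MulAut (Fin n → G) where
  toFun σ :=
    { Equiv.arrowCongr σ (Equiv.refl G) with
      map_mul' := fun _ _ => rfl }
  map_one' := MulEquiv.ext fun _ => rfl
  map_mul' := fun _ _ => MulEquiv.ext fun _ => rfl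

/-- The wreath product `G̃_n = G^n ⋊ S_n` of `G` by the symmetric group. -/
abbrev Wreath (n : ℕ) (G : Type) [Group G] :=
  SemidirectProduct (Fin n → G) (Equiv.Perm (Fin n)) (permHom n G)

noncomputable section

/-- The element `s_a` of `ℂG̃_n`: the simple transposition of `a` and `a+1`
(0-based indexing) in the symmetric-group part.  (Junk value `1` out of range.) -/
def sE (n : ℕ) (G : Type) [Group G] (a : ℕ) : MonoidAlgebra ℂ (Wreath n G) :=
  if h : a + 1 < n then
    MonoidAlgebra.of ℂ (Wreath n G)
      (SemidirectProduct.inr (Equiv.swap ⟨a, Nat.lt_of_succ_lt h⟩ ⟨a + 1, h⟩))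
  else 1

/-- The element `e_{i,j} = (1/|G|) Σ_{g ∈ G} g_i g_j⁻¹` of `ℂG̃_n` (0-based indexing),
where `g_i` is the image of `g` in the `i`-th copy of `G`.  (Junk value `1` out of range;
note `e_{i,i} = 1`.) -/
def eE (n : ℕ) (G : Type) [Group G] [Fintype G] (i j : ℕ) : MonoidAlgebra ℂ (Wreath n G) :=
  if h : i < n ∧ j < n then
    ((Fintype.card G : ℂ))⁻¹ • ∑ g : G,
      MonoidAlgebra.of ℂ (Wreath n G)
        (SemidirectProduct.inl (Pi.mulSingle ⟨i, h.1⟩ g * Pi.mulSingle ⟨j, h.2⟩ g⁻¹))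
  else 1

/-- The image `g_l` in `ℂG̃_n` of an element `g ∈ G` placed in the `l`-th copy of `G`
(0-based indexing; junk value `1` out of range). -/
def gE (n : ℕ) (G : Type) [Group G] (l : ℕ) (g : G) : MonoidAlgebra ℂ (Wreath n G) :=
  if h : l < n then
    MonoidAlgebra.of ℂ (Wreath n G) (SemidirectProduct.inl (Pi.mulSingle ⟨l, h⟩ g))
  else 1

/-- The image `g_i^{(α)}` in `ℂG̃_n` of the normalized class sum
`g^{(α)} = (1/|C_α|) Σ_{g ∈ C_α} g` placed in the `i`-th copy of `G`
(0-based indexing; junk value `1` out of range). -/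
def gClassE (n : ℕ) (G : Type) [Group G] [Fintype G] (i : ℕ) (c : ConjClasses G) :
    MonoidAlgebra ℂ (Wreath n G) :=
  if h : i < n then
    (((Set.toFinite (ConjClasses.carrier c)).toFinset.card : ℂ))⁻¹ •
      ∑ g ∈ (Set.toFinite (ConjClasses.carrier c)).toFinset,
        MonoidAlgebra.of ℂ (Wreath n G) (SemidirectProduct.inl (Pi.mulSingle ⟨i, h⟩ g))
  else 1

end


namespace JMwork

noncomputable section

open SemidirectProduct Finset

lemma permHom_apply {n : ℕ} {G : Type} [Group G] (σ : Equiv.Perm (Fin n)) (f : Fin n → G)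
    (i : Fin n) : permHom n G σ f i = f (σ.symm i) := rfl

/-- basic wreath group element -/
def wElt (n : ℕ) (G : Type) [Group G] (g : G) (a b : Fin n) : Wreath n G :=
  inl (Pi.mulSingle a g * Pi.mulSingle b g⁻¹) * inr (Equiv.swap a b)

variable {n : ℕ} {G : Type} [Group G] [Fintype G]

lemma wElt_right (g : G) (a b : Fin n) : (wElt n G g a b).right = Equiv.swap a b := by
  simp [wElt]

lemma wElt_left (g : G) (a b : Fin n) :
    (wElt n G g a b).left = Pi.mulSingle a g * Pi.mulSingle b g⁻¹ := by
  simp [wElt]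

lemma conj_w (h : Wreath n G) (g : G) (a b : Fin n) :
    h * wElt n G g a b =
      wElt n G (h.left (h.right a) * g * (h.left (h.right b))⁻¹) (h.right a) (h.right b) * h := by
  obtain ⟨f, σ⟩ := h
  refine SemidirectProduct.ext ?_ ?_
  · rw [SemidirectProduct.mul_left, SemidirectProduct.mul_left, wElt_left, wElt_left,
      wElt_right]
    funext i
    simp only [Pi.mul_apply, permHom_apply]
    rcases eq_or_ne i (σ a) with rfl | hia
    · rcases eq_or_ne a b with rfl | hab
      · rw [Equiv.symm_apply_apply]
        simp
      · have hs : σ a ≠ σ b := fun hc => hab (σ.injective hc)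
        rw [Equiv.symm_apply_apply]
        simp [Pi.mul_apply, Pi.mulSingle_eq_same,
          Pi.mulSingle_eq_of_ne hab, Pi.mulSingle_eq_of_ne hs, Equiv.swap_apply_left]
    · rcases eq_or_ne i (σ b) with rfl | hib
      · have hab : a ≠ b := fun hc => hia (by rw [hc])
        have hs : σ a ≠ σ b := fun hc => hab (σ.injective hc)
        rw [Equiv.symm_apply_apply]
        simp [Pi.mul_apply, Pi.mulSingle_eq_same,
          Pi.mulSingle_eq_of_ne hab.symm, Pi.mulSingle_eq_of_ne hs.symm, Equiv.swap_apply_right]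
        group
      · have h1 : σ.symm i ≠ a := fun hc => hia (by rw [← hc]; simp)
        have h2 : σ.symm i ≠ b := fun hc => hib (by rw [← hc]; simp)
        simp [Pi.mul_apply, Pi.mulSingle_eq_of_ne h1, Pi.mulSingle_eq_of_ne h2,
          Equiv.swap_apply_of_ne_of_ne hia hib, Pi.mulSingle_eq_of_ne hia,
          Pi.mulSingle_eq_of_ne hib]
  · show σ * Equiv.swap a b * 1 = Equiv.swap (σ a) (σ b) * σ
    rw [Equiv.swap_apply_apply]
    group

variable (n G) in
/-- normalized averaged transposition-type element -/
def FE (a b : Fin n) : MonoidAlgebra ℂ (Wreath n G) :=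
  (Fintype.card G : ℂ)⁻¹ • ∑ g : G, MonoidAlgebra.of ℂ (Wreath n G) (wElt n G g a b)

lemma mul_FE (h : Wreath n G) (a b : Fin n) :
    MonoidAlgebra.of ℂ (Wreath n G) h * FE n G a b =
      FE n G (h.right a) (h.right b) * MonoidAlgebra.of ℂ (Wreath n G) h := by
  unfold FE
  rw [mul_smul_comm, smul_mul_assoc]
  congr 1
  rw [Finset.mul_sum, Finset.sum_mul]
  refine Fintype.sum_equiv
    ⟨fun g => h.left (h.right a) * g * (h.left (h.right b))⁻¹,
     fun g => (h.left (h.right a))⁻¹ * g * h.left (h.right b),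
     fun g => by group, fun g => by group⟩ _ _ ?_
  intro g
  rw [← map_mul, ← map_mul, conj_w]
  rfl

lemma wElt_symm (g : G) (a b : Fin n) : wElt n G g a b = wElt n G g⁻¹ b a := by
  unfold wElt
  rcases eq_or_ne a b with rfl | hab
  · rw [← Pi.mulSingle_mul, ← Pi.mulSingle_mul]
    simp
  · rw [Equiv.swap_comm a b, inv_inv, (Pi.mulSingle_commute (f := fun _ : Fin n => G) hab g g⁻¹).eq]

lemma FE_symm (a b : Fin n) : FE n G a b = FE n G b a := by
  unfold FE
  rw [show (∑ g : G, MonoidAlgebra.of ℂ (Wreath n G) (wElt n G g a b))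
      = ∑ g : G, MonoidAlgebra.of ℂ (Wreath n G) (wElt n G g b a) from
    Fintype.sum_equiv (Equiv.inv G) _ _ fun g => by
      simp only [Equiv.inv_apply]; rw [wElt_symm g a b]]

variable (n G) in
/-- (twice the) sum of all averaged transpositions with both indices `< m` -/
def CE (m : ℕ) : MonoidAlgebra ℂ (Wreath n G) :=
  ∑ p : Fin n × Fin n,
    if p.1 ≠ p.2 ∧ p.1.val < m ∧ p.2.val < m then FE n G p.1 p.2 else 0

lemma CE_def (m : ℕ) : CE n G m = ∑ p : Fin n × Fin n,
    if p.1 ≠ p.2 ∧ p.1.val < m ∧ p.2.val < m then FE n G p.1 p.2 else 0 := rfl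

lemma mul_CE' (h : Wreath n G) (m : ℕ) :
    MonoidAlgebra.of ℂ (Wreath n G) h * CE n G m =
      (∑ p : Fin n × Fin n,
        if p.1 ≠ p.2 ∧ ((h.right)⁻¹ p.1).val < m ∧ ((h.right)⁻¹ p.2).val < m
        then FE n G p.1 p.2 else 0) * MonoidAlgebra.of ℂ (Wreath n G) h := by
  unfold CE
  rw [Finset.mul_sum, Finset.sum_mul]
  refine Fintype.sum_equiv (Equiv.prodCongr h.right h.right) _ _ ?_
  rintro ⟨p1, p2⟩
  simp only [Equiv.prodCongr_apply, Prod.map_fst, Prod.map_snd, Equiv.Perm.inv_def, Equiv.symm_apply_apply,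
    Prod.map]
  by_cases hc : p1 ≠ p2 ∧ p1.val < m ∧ p2.val < m
  · rw [if_pos hc, if_pos ⟨fun he => hc.1 (h.right.injective he), hc.2⟩, mul_FE]
  · rw [if_neg hc, if_neg (fun hc2 => hc ⟨fun he => hc2.1 (congrArg _ he), hc2.2⟩),
      mul_zero, zero_mul]

lemma mul_CE (h : Wreath n G) (m : ℕ)
    (hfix : ∀ i : Fin n, ¬ i.val < m → h.right i = i) :
    MonoidAlgebra.of ℂ (Wreath n G) h * CE n G m =
      CE n G m * MonoidAlgebra.of ℂ (Wreath n G) h := by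
  rw [mul_CE', CE_def]
  congr 1
  refine Finset.sum_congr rfl fun p _ => ?_
  have key : ∀ q : Fin n, (((h.right)⁻¹ q).val < m ↔ q.val < m) := by
    intro q
    constructor
    · intro hq
      by_contra hq2
      have h1 := hfix q hq2
      have h2 : (h.right)⁻¹ q = q := by
        conv_lhs => rw [← h1]
        exact h.right.symm_apply_apply q
      rw [h2] at hq
      exact hq2 hq
    · intro hq
      by_contra hq2
      have h1 := hfix _ hq2
      rw [show ∀ x, h.right (h.right⁻¹ x) = x from h.right.apply_symm_apply] at h1
      exact hq2 (h1 ▸ hq)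
  exact if_congr (by rw [key, key]) rfl rfl

lemma FE_mul_CE {m : ℕ} {a b : Fin n} (ha : a.val < m) (hb : b.val < m) :
    FE n G a b * CE n G m = CE n G m * FE n G a b := by
  unfold FE
  rw [smul_mul_assoc, mul_smul_comm]
  congr 1
  rw [Finset.sum_mul, Finset.mul_sum]
  refine Finset.sum_congr rfl fun g _ => ?_
  refine mul_CE (wElt n G g a b) m fun i hi => ?_
  rw [wElt_right]
  exact Equiv.swap_apply_of_ne_of_ne (fun he => hi (he ▸ ha)) (fun he => hi (he ▸ hb))

lemma CE_comm (m m' : ℕ) : CE n G m * CE n G m' = CE n G m' * CE n G m := by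
  have key : ∀ m m' : ℕ, m ≤ m' → CE n G m * CE n G m' = CE n G m' * CE n G m := by
    intro m m' hm
    rw [CE_def m, Finset.sum_mul, Finset.mul_sum]
    refine Finset.sum_congr rfl fun p _ => ?_
    by_cases hc : p.1 ≠ p.2 ∧ p.1.val < m ∧ p.2.val < m
    · rw [if_pos hc, FE_mul_CE (lt_of_lt_of_le hc.2.1 hm) (lt_of_lt_of_le hc.2.2 hm)]
    · rw [if_neg hc, zero_mul, mul_zero]
  rcases le_total m m' with h | h
  · exact key m m' h
  · exact (key m' m h).symm

lemma sE_mul_self {k : ℕ} (hk : k + 1 < n) : sE n G k * sE n G k = 1 := by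
  rw [sE, dif_pos hk, ← map_mul, ← map_mul, Equiv.swap_mul_self, map_one, map_one]

lemma eE_mul_sE {k : ℕ} (hk : k + 1 < n) :
    eE n G k (k + 1) * sE n G k =
      FE n G ⟨k, Nat.lt_of_succ_lt hk⟩ ⟨k + 1, hk⟩ := by
  rw [eE, dif_pos ⟨Nat.lt_of_succ_lt hk, hk⟩, sE, dif_pos hk, FE, smul_mul_assoc]
  congr 1
  rw [Finset.sum_mul]
  refine Finset.sum_congr rfl fun g _ => ?_
  rw [← map_mul]
  rfl

lemma sE_CE_sE {k : ℕ} (hk : k + 1 < n) (m : ℕ) :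
    sE n G k * CE n G m * sE n G k =
      ∑ p : Fin n × Fin n,
        if p.1 ≠ p.2 ∧ (Equiv.swap (⟨k, Nat.lt_of_succ_lt hk⟩ : Fin n) ⟨k + 1, hk⟩ p.1).val < m ∧
            (Equiv.swap (⟨k, Nat.lt_of_succ_lt hk⟩ : Fin n) ⟨k + 1, hk⟩ p.2).val < m
        then FE n G p.1 p.2 else 0 := by
  have h1 : sE n G k = MonoidAlgebra.of ℂ (Wreath n G)
      (inr (Equiv.swap (⟨k, Nat.lt_of_succ_lt hk⟩ : Fin n) ⟨k + 1, hk⟩)) := dif_pos hk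
  rw [h1, mul_CE', mul_assoc, ← map_mul, ← map_mul, Equiv.swap_mul_self, map_one, map_one,
    mul_one]
  refine Finset.sum_congr rfl fun p _ => ?_
  simp only [right_inr, Equiv.swap_inv]
  rfl

lemma swap_val {k : ℕ} (hk : k + 1 < n) (x : Fin n) :
    ((Equiv.swap (⟨k, Nat.lt_of_succ_lt hk⟩ : Fin n) ⟨k + 1, hk⟩) x).val =
      if x.val = k then k + 1 else if x.val = k + 1 then k else x.val := by
  rcases eq_or_ne x ⟨k, Nat.lt_of_succ_lt hk⟩ with rfl | h0
  · rw [Equiv.swap_apply_left]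
    simp
  · rcases eq_or_ne x ⟨k + 1, hk⟩ with rfl | h1
    · rw [Equiv.swap_apply_right]
      simp
    · rw [Equiv.swap_apply_of_ne_of_ne h0 h1, if_neg (fun hc => h0 (Fin.ext hc)),
        if_neg (fun hc => h1 (Fin.ext hc))]

lemma two_FE {k : ℕ} (hk : k + 1 < n) :
    (2:ℂ) • FE n G ⟨k, Nat.lt_of_succ_lt hk⟩ ⟨k + 1, hk⟩ =
      (∑ p : Fin n × Fin n,
        if p = ((⟨k, Nat.lt_of_succ_lt hk⟩ : Fin n), (⟨k + 1, hk⟩ : Fin n))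
        then FE n G p.1 p.2 else 0) +
      ∑ p : Fin n × Fin n,
        if p = ((⟨k + 1, hk⟩ : Fin n), (⟨k, Nat.lt_of_succ_lt hk⟩ : Fin n))
        then FE n G p.1 p.2 else 0 := by
  rw [Finset.sum_ite_eq' Finset.univ, Finset.sum_ite_eq' Finset.univ, if_pos (Finset.mem_univ _),
    if_pos (Finset.mem_univ _), two_smul]
  congr 1
  exact FE_symm _ _

lemma jm_formula (J : ℕ → MonoidAlgebra ℂ (Wreath n G)) (h0 : J 0 = 0)
    (hrec : ∀ i : ℕ, i + 1 < n →
      J (i + 1) = sE n G i * J i * sE n G i + eE n G i (i + 1) * sE n G i) :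
    ∀ k, k < n → (2:ℂ) • J k = CE n G (k + 1) - CE n G k := by
  intro k
  induction k with
  | zero =>
    intro _
    have hz : ∀ m, m ≤ 1 → CE n G m = 0 := by
      intro m hm
      refine Finset.sum_eq_zero fun p _ => if_neg ?_
      rintro ⟨h1, h2, h3⟩
      exact h1 (Fin.ext (by omega))
    rw [h0, smul_zero, hz 1 le_rfl, hz 0 (by omega), sub_zero]
  | succ k ih =>
    intro hk1
    have ihk := ih (Nat.lt_of_succ_lt hk1)
    rw [hrec k hk1, smul_add]
    have e1 : (2:ℂ) • (sE n G k * J k * sE n G k)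
        = sE n G k * ((2:ℂ) • J k) * sE n G k := by
      rw [mul_smul_comm, smul_mul_assoc]
    have hvv : ∀ x : Fin n,
        ((Equiv.swap (⟨k, Nat.lt_of_succ_lt hk1⟩ : Fin n) ⟨k + 1, hk1⟩ x).val < k ↔ x.val < k) := by
      intro x
      rw [swap_val hk1]
      split_ifs <;> omega
    have e2 : (∑ p : Fin n × Fin n,
        if p.1 ≠ p.2 ∧
            (Equiv.swap (⟨k, Nat.lt_of_succ_lt hk1⟩ : Fin n) ⟨k + 1, hk1⟩ p.1).val < k ∧
            (Equiv.swap (⟨k, Nat.lt_of_succ_lt hk1⟩ : Fin n) ⟨k + 1, hk1⟩ p.2).val < k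
        then FE n G p.1 p.2 else 0) = CE n G k := by
      rw [CE_def]
      exact Finset.sum_congr rfl fun p _ =>
        if_congr (and_congr Iff.rfl (and_congr (hvv _) (hvv _))) rfl rfl
    rw [e1, ihk, mul_sub, sub_mul, sE_CE_sE hk1, sE_CE_sE hk1, e2, eE_mul_sE hk1,
      sub_add_eq_add_sub, sub_eq_sub_iff_add_eq_add, two_FE hk1, CE_def (k + 1), CE_def k,
      CE_def (k + 2), ← Finset.sum_add_distrib, ← Finset.sum_add_distrib,
      ← Finset.sum_add_distrib, ← Finset.sum_add_distrib]
    refine Finset.sum_congr rfl fun p _ => ?_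
    obtain ⟨p1, p2⟩ := p
    dsimp only
    have hv0 : ((⟨k, Nat.lt_of_succ_lt hk1⟩ : Fin n) : ℕ) = k := rfl
    have hv1 : ((⟨k + 1, hk1⟩ : Fin n) : ℕ) = k + 1 := rfl
    have hA1 : ∀ x : Fin n,
        ((Equiv.swap (⟨k, Nat.lt_of_succ_lt hk1⟩ : Fin n) ⟨k + 1, hk1⟩ x).val < k + 1
          ↔ (x.val < k ∨ x.val = k + 1)) := by
      intro x
      rw [swap_val hk1]
      split_ifs <;> omega
    simp only [ne_eq, Prod.mk.injEq, Fin.ext_iff, hA1, hv0, hv1]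
    split_ifs <;> first | abel1 | (exfalso; omega)

end

end JMwork

/-- The Jucys–Murphy elements of `ℂG̃_n`, defined by `j̃_1 = 0` and
`j̃_{i+1} = s_i j̃_i s_i + e_{i,i+1} s_i` (here 0-based: `J k = j̃_{k+1}`), pairwise
commute. -/
theorem jucysMurphy_commute (n : ℕ) (G : Type) [Group G] [Fintype G]
    (J : ℕ → MonoidAlgebra ℂ (Wreath n G)) (hn : 0 < n)
    (h0 : J 0 = 0)
    (hrec : ∀ i : ℕ, i + 1 < n →
      J (i + 1) = sE n G i * J i * sE n G i + eE n G i (i + 1) * sE n G i) :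
    ∀ k l : ℕ, k < n → l < n → J k * J l = J l * J k := by
  intro k l hk hl
  have hf := JMwork.jm_formula J h0 hrec
  have hh : ∀ x y : MonoidAlgebra ℂ (Wreath n G),
      ((2:ℂ) • x) * ((2:ℂ) • y) = (4:ℂ) • (x * y) := by
    intro x y
    rw [smul_mul_assoc, mul_smul_comm, smul_smul]
    norm_num
  have h2 : (4:ℂ) • (J k * J l) = (4:ℂ) • (J l * J k) := by
    rw [← hh, ← hh, hf k hk, hf l hl, sub_mul, sub_mul, mul_sub, mul_sub, mul_sub, mul_sub,
      JMwork.CE_comm (k + 1) (l + 1), JMwork.CE_comm (k + 1) l, JMwork.CE_comm k (l + 1),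
      JMwork.CE_comm k l]
    abel
  calc J k * J l = (4:ℂ)⁻¹ • ((4:ℂ) • (J k * J l)) := by rw [smul_smul]; norm_num
    _ = (4:ℂ)⁻¹ • ((4:ℂ) • (J l * J k)) := by rw [h2]
    _ = J l * J k := by rw [smul_smul]; norm_num
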